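/- Let q ≥ 2 and d be positive integers. Define the coefficients of the formal power series (u^d/(1+u^d))·(1-qu²)(1+u)/(1-qu) in ℚ[[u]]. Then for m ≥ d+3, the coefficient of u^m equals ((1-q^{-2})/(1+q^{-d}))·q^{m-d} + E_m where |E_m| is bounded by a constant depending only on q and d (not on m). -/

import Mathlib

open PowerSeries

private lemma geom_inv18 (c : ℚ) :
    (PowerSeries.mk fun n => c ^ n) * (1 - C (R := ℚ) c * X) = 1 := by
  ext n
  rw [mul_sub, mul_one, map_sub]
  cases n with
  | zero => simp
  | succ n =>
    rw [show (PowerSeries.mk fun n => c ^ n) * (C (R := ℚ) c * X) =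
      ((PowerSeries.mk fun n => c ^ n) * C (R := ℚ) c) * X by ring, coeff_succ_mul_X]
    simp [pow_succ, mul_comm]

private lemma alt_inv18 (d : ℕ) (hd : 1 ≤ d) :
    (PowerSeries.mk fun n => if d ∣ n then ((-1:ℚ)) ^ (n / d) else 0) * (1 + X ^ d) = 1 := by
  ext n
  rw [mul_add, mul_one, map_add, coeff_mul_X_pow']
  by_cases h0 : n = 0
  · subst h0
    simp [show ¬ d ≤ 0 by omega]
  · rw [PowerSeries.coeff_one, if_neg h0, coeff_mk]
    by_cases hdn : d ≤ n
    · rw [if_pos hdn, coeff_mk]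
      by_cases hdvd : d ∣ n
      · have h1 : d ∣ n - d := Nat.dvd_sub hdvd dvd_rfl
        rw [if_pos hdvd, if_pos h1]
        have hdiv : n / d = (n - d) / d + 1 := by
          have h2 : n / d = (n - d + d) / d := by rw [Nat.sub_add_cancel hdn]
          rw [h2, Nat.add_div_right _ (by omega)]
        rw [hdiv, pow_succ]
        ring
      · rw [if_neg hdvd, if_neg, add_zero]
        intro hc
        have := Nat.dvd_add hc (dvd_refl d)
        rw [Nat.sub_add_cancel hdn] at this
        exact hdvd this
    · rw [if_neg hdn, add_zero, if_neg]
      intro hdvd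
      exact hdn (Nat.le_of_dvd (by omega) hdvd)

set_option maxHeartbeats 1000000 in
/-- In `ℚ⟦u⟧`, the coefficient of `u^m` in `(u^d/(1+u^d))·(1-qu²)(1+u)/(1-qu)`
equals `((1-q⁻²)/(1+q^{-d}))·q^{m-d}` up to an error bounded uniformly in `m`,
for all `m ≥ d + 3`. -/
theorem stmt18 (q d : ℕ) (hq : 2 ≤ q) (hd : 1 ≤ d) :
    ∃ B : ℚ, ∀ m : ℕ, d + 3 ≤ m →
      |PowerSeries.coeff (R := ℚ) m
          (PowerSeries.X ^ d * (1 + PowerSeries.X ^ d)⁻¹ *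
            ((1 - PowerSeries.C (R := ℚ) (q : ℚ) * PowerSeries.X ^ 2) *
              (1 + PowerSeries.X)) *
            (1 - PowerSeries.C (R := ℚ) (q : ℚ) * PowerSeries.X)⁻¹) -
        ((1 - (q : ℚ) ^ (-(2 : ℤ))) / (1 + (q : ℚ) ^ (-(d : ℤ)))) *
          (q : ℚ) ^ (m - d)| ≤ B := by
  have hq0 : (0:ℚ) < (q:ℚ) := by exact_mod_cast (by omega : 0 < q)
  have hq1 : (1:ℚ) ≤ (q:ℚ) := by exact_mod_cast (by omega : 1 ≤ q)
  have hqne : (q:ℚ) ≠ 0 := ne_of_gt hq0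
  set a : ℚ := ((q:ℚ)^2 - 1) / ((q:ℚ)^2 * ((q:ℚ)^d + 1)) with ha
  have hden : (q:ℚ)^d + 1 ≠ 0 := by positivity
  have ha0 : 0 ≤ a := by
    rw [ha]
    apply div_nonneg
    · nlinarith
    · positivity
  have hA : a + a * (q:ℚ)^d + ((q:ℚ)^2)⁻¹ = 1 := by
    rw [ha]; field_simp; ring
  have hA' : C (R := ℚ) a + C (R := ℚ) a * (C (R := ℚ) (q:ℚ))^d + C (R := ℚ) (((q:ℚ)^2)⁻¹) = 1 := by
    have := congrArg (C (R := ℚ)) hA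
    simpa only [map_add, map_mul, map_one, map_pow] using this
  have hB' : C (R := ℚ) (q:ℚ) * C (R := ℚ) (((q:ℚ)^2)⁻¹) = C (R := ℚ) ((q:ℚ)⁻¹) := by
    rw [← map_mul]
    congr 1
    field_simp
  have hC' : C (R := ℚ) (q:ℚ) * (1 + C (R := ℚ) ((q:ℚ)⁻¹)) = C (R := ℚ) (q:ℚ) + 1 := by
    have h : (q:ℚ) * (1 + (q:ℚ)⁻¹) = (q:ℚ) + 1 := by field_simp
    have := congrArg (C (R := ℚ)) h
    simpa only [map_add, map_mul, map_one] using this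
  set g : ℕ → ℚ⟦X⟧ := fun i => C (R := ℚ) (-a) * (C (R := ℚ) (q:ℚ))^i * X^i with hgdef
  have tele : (∑ i ∈ Finset.range d, g i) * (1 - C (R := ℚ) (q:ℚ) * X) = g 0 - g d := by
    rw [Finset.sum_mul, ← Finset.sum_range_sub' g d]
    refine Finset.sum_congr rfl fun i _ => ?_
    simp only [hgdef, pow_succ]
    ring
  set Q : ℚ⟦X⟧ := (∑ i ∈ Finset.range d, g i) + C (R := ℚ) (((q:ℚ)^2)⁻¹) * X^d
      + (1 + C (R := ℚ) ((q:ℚ)⁻¹)) * X^(d+1) + X^(d+2) with hQdef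
  have key : (X:ℚ⟦X⟧)^d * ((1 - C (R := ℚ) (q:ℚ) * X^2) * (1 + X))
      = C (R := ℚ) a * (1 + X^d) + Q * (1 - C (R := ℚ) (q:ℚ) * X) := by
    rw [hQdef, add_mul, add_mul, add_mul, tele]
    simp only [hgdef, pow_zero, mul_one, one_mul, map_neg]
    linear_combination (-(X:ℚ⟦X⟧)^d) * hA' + X^(d+1) * hB' + X^(d+2) * hC'
  set G : ℚ⟦X⟧ := PowerSeries.mk fun n => (q:ℚ) ^ n with hGdef
  set S : ℚ⟦X⟧ := PowerSeries.mk fun n => if d ∣ n then ((-1:ℚ)) ^ (n / d) else 0 with hSdef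
  have hGmul : G * (1 - C (R := ℚ) (q:ℚ) * X) = 1 := geom_inv18 (q:ℚ)
  have hSmul : S * (1 + X ^ d) = 1 := alt_inv18 d hd
  have hGinv : (1 - C (R := ℚ) (q:ℚ) * X)⁻¹ = G := by
    rw [PowerSeries.inv_eq_iff_mul_eq_one]
    · exact hGmul
    · simp
  have hSinv : (1 + (X:ℚ⟦X⟧) ^ d)⁻¹ = S := by
    rw [PowerSeries.inv_eq_iff_mul_eq_one]
    · exact hSmul
    · simp [zero_pow (by omega : d ≠ 0)]
  have hF : (X:ℚ⟦X⟧) ^ d * (1 + X ^ d)⁻¹ * ((1 - C (R := ℚ) (q:ℚ) * X ^ 2) * (1 + X)) *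
      (1 - C (R := ℚ) (q:ℚ) * X)⁻¹ = C (R := ℚ) a * G + Q * S := by
    rw [hGinv, hSinv]
    calc (X:ℚ⟦X⟧) ^ d * S * ((1 - C (R := ℚ) (q:ℚ) * X ^ 2) * (1 + X)) * G
        = ((X:ℚ⟦X⟧)^d * ((1 - C (R := ℚ) (q:ℚ) * X^2) * (1 + X))) * (S * G) := by ring
      _ = (C (R := ℚ) a * (1 + X^d) + Q * (1 - C (R := ℚ) (q:ℚ) * X)) * (S * G) := by rw [key]
      _ = C (R := ℚ) a * G * (S * (1 + X^d)) + Q * S * (G * (1 - C (R := ℚ) (q:ℚ) * X)) := by ring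
      _ = C (R := ℚ) a * G + Q * S := by rw [hSmul, hGmul, mul_one, mul_one]
  refine ⟨(∑ i ∈ Finset.range d, a * (q:ℚ)^i) + 4, fun m hm => ?_⟩
  rw [hF, map_add]
  have hmain : PowerSeries.coeff (R := ℚ) m (C (R := ℚ) a * G) = a * (q:ℚ)^m := by
    rw [coeff_C_mul, hGdef, coeff_mk]
  have htgt : a * (q:ℚ)^m = ((1 - (q:ℚ)^(-(2:ℤ))) / (1 + (q:ℚ)^(-(d:ℤ)))) * (q:ℚ)^(m-d) := by
    have hz2 : (q:ℚ)^(-(2:ℤ)) = ((q:ℚ)^2)⁻¹ := by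
      rw [zpow_neg]
      norm_cast
    have hzd : (q:ℚ)^(-(d:ℤ)) = ((q:ℚ)^d)⁻¹ := by
      rw [zpow_neg, zpow_natCast]
    rw [hz2, hzd]
    have hqm : (q:ℚ)^m = (q:ℚ)^(m-d) * (q:ℚ)^d := by
      rw [← pow_add, Nat.sub_add_cancel (by omega)]
    rw [hqm, ha]
    have h1 : 1 + ((q:ℚ)^d)⁻¹ ≠ 0 := by positivity
    field_simp
  rw [hmain, ← htgt, add_sub_cancel_left]
  -- now bound |coeff m (Q * S)|
  have hSbd : ∀ j, |PowerSeries.coeff (R := ℚ) j S| ≤ 1 := by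
    intro j
    rw [hSdef, coeff_mk]
    split
    · rw [abs_pow, abs_neg, abs_one, one_pow]
    · simp
  have hQS : Q * S = (∑ i ∈ Finset.range d, C (R := ℚ) (-(a * (q:ℚ)^i)) * (X^i * S))
      + C (R := ℚ) (((q:ℚ)^2)⁻¹) * (X^d * S) + C (R := ℚ) (1+(q:ℚ)⁻¹) * (X^(d+1) * S) + X^(d+2) * S := by
    rw [hQdef]
    simp only [add_mul, Finset.sum_mul, hgdef, map_neg, map_mul, map_pow, map_add, map_one]
    congr 1
    congr 1
    congr 1
    · refine Finset.sum_congr rfl fun i _ => ?_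
      ring
    · ring
    · ring
  have hcoeff : PowerSeries.coeff (R := ℚ) m (Q * S) =
      (∑ i ∈ Finset.range d, -(a * (q:ℚ)^i) * PowerSeries.coeff (R := ℚ) (m - i) S)
      + ((q:ℚ)^2)⁻¹ * PowerSeries.coeff (R := ℚ) (m - d) S
      + (1+(q:ℚ)⁻¹) * PowerSeries.coeff (R := ℚ) (m - (d+1)) S
      + PowerSeries.coeff (R := ℚ) (m - (d+2)) S := by
    rw [hQS, map_add, map_add, map_add, map_sum]
    congr 1
    congr 1
    congr 1
    · refine Finset.sum_congr rfl fun i hi => ?_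
      have hi' : i ≤ m := by
        have := Finset.mem_range.mp hi; omega
      rw [coeff_C_mul, coeff_X_pow_mul', if_pos hi']
    · rw [coeff_C_mul, coeff_X_pow_mul', if_pos (by omega)]
    · rw [coeff_C_mul, coeff_X_pow_mul', if_pos (by omega)]
    · rw [coeff_X_pow_mul', if_pos (by omega)]
  rw [hcoeff]
  have hqinv1 : ((q:ℚ)^2)⁻¹ ≤ 1 := by
    rw [inv_le_one_iff₀]
    right
    nlinarith
  have hqinv2 : (q:ℚ)⁻¹ ≤ 1 := by
    rw [inv_le_one_iff₀]
    right
    nlinarith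
  have t1 : |∑ i ∈ Finset.range d, -(a * (q:ℚ)^i) * PowerSeries.coeff (R := ℚ) (m - i) S|
      ≤ ∑ i ∈ Finset.range d, a * (q:ℚ)^i := by
    refine (Finset.abs_sum_le_sum_abs _ _).trans (Finset.sum_le_sum fun i _ => ?_)
    rw [abs_mul, abs_neg]
    have h1 : |a * (q:ℚ)^i| = a * (q:ℚ)^i := abs_of_nonneg (by positivity)
    rw [h1]
    calc a * (q:ℚ)^i * |PowerSeries.coeff (R := ℚ) (m - i) S| ≤ a * (q:ℚ)^i * 1 :=
          mul_le_mul_of_nonneg_left (hSbd _) (by positivity)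
      _ = a * (q:ℚ)^i := mul_one _
  have t2 : |((q:ℚ)^2)⁻¹ * PowerSeries.coeff (R := ℚ) (m - d) S| ≤ 1 := by
    rw [abs_mul]
    calc |((q:ℚ)^2)⁻¹| * |PowerSeries.coeff (R := ℚ) (m - d) S|
        ≤ 1 * 1 := by
          apply mul_le_mul _ (hSbd _) (abs_nonneg _) zero_le_one
          rw [abs_of_nonneg (by positivity)]; exact hqinv1
      _ = 1 := by norm_num
  have t3 : |(1+(q:ℚ)⁻¹) * PowerSeries.coeff (R := ℚ) (m - (d+1)) S| ≤ 2 := by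
    rw [abs_mul]
    calc |1+(q:ℚ)⁻¹| * |PowerSeries.coeff (R := ℚ) (m - (d+1)) S|
        ≤ 2 * 1 := by
          apply mul_le_mul _ (hSbd _) (abs_nonneg _) (by norm_num)
          rw [abs_of_nonneg (by positivity)]; linarith
      _ = 2 := by norm_num
  have t4 := hSbd (m - (d+2))
  calc |(∑ i ∈ Finset.range d, -(a * (q:ℚ)^i) * PowerSeries.coeff (R := ℚ) (m - i) S)
      + ((q:ℚ)^2)⁻¹ * PowerSeries.coeff (R := ℚ) (m - d) S
      + (1+(q:ℚ)⁻¹) * PowerSeries.coeff (R := ℚ) (m - (d+1)) S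
      + PowerSeries.coeff (R := ℚ) (m - (d+2)) S|
      ≤ |(∑ i ∈ Finset.range d, -(a * (q:ℚ)^i) * PowerSeries.coeff (R := ℚ) (m - i) S)
      + ((q:ℚ)^2)⁻¹ * PowerSeries.coeff (R := ℚ) (m - d) S
      + (1+(q:ℚ)⁻¹) * PowerSeries.coeff (R := ℚ) (m - (d+1)) S|
      + |PowerSeries.coeff (R := ℚ) (m - (d+2)) S| := abs_add_le _ _
    _ ≤ (|(∑ i ∈ Finset.range d, -(a * (q:ℚ)^i) * PowerSeries.coeff (R := ℚ) (m - i) S)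
      + ((q:ℚ)^2)⁻¹ * PowerSeries.coeff (R := ℚ) (m - d) S|
      + |(1+(q:ℚ)⁻¹) * PowerSeries.coeff (R := ℚ) (m - (d+1)) S|) + _ := by
        gcongr
        exact abs_add_le _ _
    _ ≤ ((|∑ i ∈ Finset.range d, -(a * (q:ℚ)^i) * PowerSeries.coeff (R := ℚ) (m - i) S|
      + |((q:ℚ)^2)⁻¹ * PowerSeries.coeff (R := ℚ) (m - d) S|) + _) + _ := by
        gcongr
        exact abs_add_le _ _
    _ ≤ (((∑ i ∈ Finset.range d, a * (q:ℚ)^i) + 1) + 2) + 1 := by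
        gcongr
    _ ≤ (∑ i ∈ Finset.range d, a * (q:ℚ)^i) + 4 := by linarith
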